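/- arXiv:2407.08656 — 2 statements merged into one kernel-verified Lean document; each statement's English description precedes it below -/
import Mathlib

section
/- Assume κ₂, …, κ_n are all nonzero, and for each 1 ≤ m ≤ n define u_{m,1} = −c_m and u_{m,i} = ((−1)^i/[κ_i]!) ∂_{t₀}^{i−1} c_m for 2 ≤ i ≤ m, with the convention u_{m,i} = 0 for i > m. Then for every 0 ≤ j < n the following identities hold on ℝ^{n+1}: (a) ∂u_{n,n}/∂t_j = 0; (b) ∂u_{n,i}/∂t_j + κ_{i+1} u_{n,i+1} = 0 for max(j,1) ≤ i ≤ n−1; (c) ∂u_{n,i}/∂t_j + κ_{i+1}(u_{n,i+1} − u_{j,i+1}) = 0 for 1 ≤ i ≤ j−1. -/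
/-- `κₘ = ρ + m - 1`. -/
noncomputable def kappa (ρ : ℝ) (m : ℕ) : ℝ := ρ + m - 1

/-- `[κ₁]! = 1`, `[κᵣ]! = κ₂κ₃⋯κᵣ` for `r ≥ 2` (and `[κ₀]! = 1` by convention). -/
noncomputable def kfact (ρ : ℝ) : ℕ → ℝ
  | 0 => 1
  | 1 => 1
  | (r + 2) => kfact ρ (r + 1) * kappa ρ (r + 2)

/-- `τₘ = t₀ + t₁ + ⋯ + tₘ`. -/
noncomputable def tau (t : ℕ → ℝ) (m : ℕ) : ℝ := ∑ i ∈ Finset.range (m + 1), t i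

/-- The `s`-fold iterate of the integration operator `(∂ₜ⁻¹ f)(x) = ∫₀ˣ f`. -/
noncomputable def iInt : ℕ → (ℝ → ℝ) → ℝ → ℝ
  | 0, f => f
  | (s + 1), f => fun x => ∫ y in (0:ℝ)..x, iInt s f y

/-- Partial derivative `∂f/∂tⱼ` of a vector-valued function of the variables
`t = (t₀, t₁, t₂, …)`. -/
noncomputable def pdG {𝔤 : Type*} [NormedAddCommGroup 𝔤] [NormedSpace ℝ 𝔤]
    (j : ℕ) (f : (ℕ → ℝ) → 𝔤) (t : ℕ → ℝ) : 𝔤 :=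
  deriv (fun s => f (Function.update t j s)) (t j)

/-- Iterated partial derivative `∂ᵏ/∂t₀ᵏ`. -/
noncomputable def pd0iter : ℕ → ((ℕ → ℝ) → ℝ) → (ℕ → ℝ) → ℝ
  | 0, f => f
  | (k + 1), f => pdG 0 (pd0iter k f)

/-- The function `cₙ(t₀, …, tₙ)` of the paper:
`cₙ = Σ_{m=2}^{n-1} Σ_{r=2}^{m} Σ_{s=1}^{r-1} ((-1)^{r-1}[κᵣ]!/(r-s-1)!) τ_{m-1}^{r-s-1}
((∂ₜₘ⁻¹)ˢ a_{m,r})(tₘ) + Σ_{r=1}^{n} ((-1)^r [κᵣ]!/(r-1)!) τ_{n-1}^{r-1} a_{n,r}(tₙ)`. -/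
noncomputable def cfun (ρ : ℝ) (a : ℕ → ℕ → ℝ → ℝ) (n : ℕ) (t : ℕ → ℝ) : ℝ :=
  (∑ m ∈ Finset.Icc 2 (n - 1), ∑ r ∈ Finset.Icc 2 m, ∑ s ∈ Finset.Icc 1 (r - 1),
      ((-1 : ℝ) ^ (r - 1) * kfact ρ r / ((r - s - 1).factorial : ℝ))
        * tau t (m - 1) ^ (r - s - 1) * iInt s (a m r) (t m))
    + ∑ r ∈ Finset.Icc 1 n,
        ((-1 : ℝ) ^ r * kfact ρ r / ((r - 1).factorial : ℝ))
          * tau t (n - 1) ^ (r - 1) * a n r (t n)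

/-- The deformation coefficients `u_{m,1} = -cₘ`, `u_{m,i} = ((-1)ⁱ/[κᵢ]!) ∂_{t₀}^{i-1} cₘ`
for `2 ≤ i ≤ m`, with the convention `u_{m,i} = 0` for `i > m`. -/
noncomputable def uA (ρ : ℝ) (a : ℕ → ℕ → ℝ → ℝ) (m i : ℕ) (t : ℕ → ℝ) : ℝ :=
  if m < i then 0
  else if i = 1 then -(cfun ρ a m t)
  else ((-1 : ℝ) ^ i / kfact ρ i) * pd0iter (i - 1) (cfun ρ a m) t

section StmtSixAux

open Finset

/-! ### Basic facts about `iInt` -/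

lemma iInt_continuous {f : ℝ → ℝ} (hf : Continuous f) : ∀ s, Continuous (iInt s f) := by
  intro s
  induction s with
  | zero => exact hf
  | succ s ih =>
    show Continuous (fun x => ∫ y in (0:ℝ)..x, iInt s f y)
    exact intervalIntegral.continuous_primitive (fun a b => ih.intervalIntegrable a b) 0

lemma iInt_hasDerivAt {f : ℝ → ℝ} (hf : Continuous f) (s : ℕ) (x : ℝ) :
    HasDerivAt (iInt (s + 1) f) (iInt s f x) x := by
  show HasDerivAt (fun x => ∫ y in (0:ℝ)..x, iInt s f y) (iInt s f x) x
  exact ((iInt_continuous hf s).integral_hasStrictDerivAt 0 x).hasDerivAt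

/-! ### `tau` under updates -/

lemma tau_update_of_lt (t : ℕ → ℝ) {j m : ℕ} (h : m < j) (x : ℝ) :
    tau (Function.update t j x) m = tau t m := by
  unfold tau
  refine Finset.sum_congr rfl fun i hi => ?_
  rw [Finset.mem_range] at hi
  exact Function.update_of_ne (by omega) _ _

lemma tau_update_of_le (t : ℕ → ℝ) {j m : ℕ} (h : j ≤ m) (x : ℝ) :
    tau (Function.update t j x) m = x + (tau t m - t j) := by
  unfold tau
  rw [Finset.sum_update_of_mem (by rw [Finset.mem_range]; omega)]
  rw [Finset.sdiff_singleton_eq_erase]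
  have h2 := Finset.sum_erase_add (Finset.range (m+1)) t
    (show j ∈ Finset.range (m+1) by rw [Finset.mem_range]; omega)
  linarith

/-! ### The closed form `Ffun` of the iterated `t₀`-derivatives of `cfun` -/

noncomputable def Ffun (ρ : ℝ) (a : ℕ → ℕ → ℝ → ℝ) (n k : ℕ) (t : ℕ → ℝ) : ℝ :=
  (∑ m ∈ Finset.Icc 2 (n - 1), ∑ r ∈ Finset.Icc 2 m, ∑ s ∈ Finset.Icc 1 (r - 1),
      ((-1 : ℝ) ^ (r - 1) * kfact ρ r / ((r - s - 1).factorial : ℝ))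
        * ((r - s - 1).descFactorial k : ℝ) * tau t (m - 1) ^ (r - s - 1 - k)
        * iInt s (a m r) (t m))
    + ∑ r ∈ Finset.Icc 1 n,
        ((-1 : ℝ) ^ r * kfact ρ r / ((r - 1).factorial : ℝ))
          * ((r - 1).descFactorial k : ℝ) * tau t (n - 1) ^ (r - 1 - k) * a n r (t n)

/-- The "defect" appearing when differentiating `Ffun` in direction `tⱼ`. -/
noncomputable def Efun (ρ : ℝ) (a : ℕ → ℕ → ℝ → ℝ) (j k : ℕ) (t : ℕ → ℝ) : ℝ :=
  -(∑ m ∈ Finset.Icc 2 j, ∑ r ∈ Finset.Icc 2 m, ∑ s ∈ Finset.Icc 1 (r - 1),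
      ((-1 : ℝ) ^ (r - 1) * kfact ρ r / ((r - s - 1).factorial : ℝ))
        * ((r - s - 1).descFactorial (k + 1) : ℝ) * tau t (m - 1) ^ (r - s - 1 - (k + 1))
        * iInt s (a m r) (t m))
  + ∑ r ∈ Finset.Icc 2 j, ∑ s ∈ Finset.Icc 1 (r - 1),
      ((-1 : ℝ) ^ (r - 1) * kfact ρ r / ((r - s - 1).factorial : ℝ))
        * ((r - s - 1).descFactorial k : ℝ) * tau t (j - 1) ^ (r - s - 1 - k)
        * iInt (s - 1) (a j r) (t j)

lemma Ffun_zero (ρ : ℝ) (a : ℕ → ℕ → ℝ → ℝ) (n : ℕ) : Ffun ρ a n 0 = cfun ρ a n := by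
  funext t
  unfold Ffun cfun
  simp

lemma Ffun_eq_zero (ρ : ℝ) (a : ℕ → ℕ → ℝ → ℝ) {n k : ℕ} (h : n ≤ k) (t : ℕ → ℝ) :
    Ffun ρ a n k t = 0 := by
  unfold Ffun
  rw [Finset.sum_eq_zero, Finset.sum_eq_zero, add_zero]
  · intro r hr
    rw [Finset.mem_Icc] at hr
    rw [Nat.descFactorial_eq_zero_iff_lt.2 (by omega)]
    simp
  · intro m hm
    rw [Finset.mem_Icc] at hm
    refine Finset.sum_eq_zero fun r hr => Finset.sum_eq_zero fun s hs => ?_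
    rw [Finset.mem_Icc] at hr hs
    rw [Nat.descFactorial_eq_zero_iff_lt.2 (by omega)]
    simp

/-! ### Finset helper lemmas -/

lemma sum_split (F G : ℕ → ℝ) {N j : ℕ} (hj : j ≤ N) :
    ∑ m ∈ Finset.Icc 2 N, (if m = j then G m else if j < m then F m else 0)
      = ∑ m ∈ Finset.Icc 2 N, F m - ∑ m ∈ Finset.Icc 2 j, F m
        + (if 2 ≤ j then G j else 0) := by
  have hsub : Finset.Icc 2 j ⊆ Finset.Icc 2 N := Finset.Icc_subset_Icc_right hj
  have h1 : ∑ m ∈ Finset.Icc 2 N, ((if m = j then G m else if j < m then F m else 0) - F m)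
      = ∑ m ∈ Finset.Icc 2 j, ((if m = j then G m else if j < m then F m else 0) - F m) := by
    refine (Finset.sum_subset hsub fun m hm hm2 => ?_).symm
    rw [Finset.mem_Icc] at hm
    rw [Finset.mem_Icc] at hm2
    rw [if_neg (by omega), if_pos (by omega), sub_self]
  have h2 : ∑ m ∈ Finset.Icc 2 j, ((if m = j then G m else if j < m then F m else 0) - F m)
      = ∑ m ∈ Finset.Icc 2 j, ((if m = j then G m else 0) - F m) := by
    refine Finset.sum_congr rfl fun m hm => ?_
    rw [Finset.mem_Icc] at hm
    rcases eq_or_ne m j with h | h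
    · rw [if_pos h, if_pos h]
    · rw [if_neg h, if_neg h, if_neg (by omega)]
  have h3 : ∑ m ∈ Finset.Icc 2 j, (if m = j then G m else 0)
      = if 2 ≤ j then G j else 0 := by
    rw [Finset.sum_ite_eq' (Finset.Icc 2 j) j G]
    by_cases h : 2 ≤ j
    · rw [if_pos (by rw [Finset.mem_Icc]; omega), if_pos h]
    · rw [if_neg (by rw [Finset.mem_Icc]; omega), if_neg h]
  rw [Finset.sum_sub_distrib, Finset.sum_sub_distrib] at h1
  rw [Finset.sum_sub_distrib, Finset.sum_sub_distrib, h3] at h2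
  linarith

lemma sum_shift (f : ℕ → ℝ) (N : ℕ) :
    ∑ s ∈ Finset.Icc 1 N, f (s + 1) = ∑ s ∈ Finset.Icc 2 (N + 1), f s := by
  induction N with
  | zero => simp
  | succ N ih =>
    rw [Finset.sum_Icc_succ_top (by omega), ih, ← Finset.sum_Icc_succ_top (by omega)]

/-! ### The master derivative lemma -/

lemma hasDerivAt_Ffun (ρ : ℝ) (a : ℕ → ℕ → ℝ → ℝ) (ha : ∀ m r, Continuous (a m r))
    {n j : ℕ} (k : ℕ) (hj : j < n) (t : ℕ → ℝ) :
    HasDerivAt (fun x => Ffun ρ a n k (Function.update t j x))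
      (Ffun ρ a n (k + 1) t + Efun ρ a j k t) (t j) := by
  have hjn : j ≤ n - 1 := by omega
  -- derivative of the first (triple) sum, termwise
  have h1 : HasDerivAt
      (fun x => ∑ m ∈ Finset.Icc 2 (n - 1), ∑ r ∈ Finset.Icc 2 m, ∑ s ∈ Finset.Icc 1 (r - 1),
        ((-1 : ℝ) ^ (r - 1) * kfact ρ r / ((r - s - 1).factorial : ℝ))
          * ((r - s - 1).descFactorial k : ℝ)
          * tau (Function.update t j x) (m - 1) ^ (r - s - 1 - k)
          * iInt s (a m r) (Function.update t j x m))
      (∑ m ∈ Finset.Icc 2 (n - 1),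
        (if m = j then
          ∑ r ∈ Finset.Icc 2 m, ∑ s ∈ Finset.Icc 1 (r - 1),
            ((-1 : ℝ) ^ (r - 1) * kfact ρ r / ((r - s - 1).factorial : ℝ))
              * ((r - s - 1).descFactorial k : ℝ) * tau t (m - 1) ^ (r - s - 1 - k)
              * iInt (s - 1) (a j r) (t j)
        else if j < m then
          ∑ r ∈ Finset.Icc 2 m, ∑ s ∈ Finset.Icc 1 (r - 1),
            ((-1 : ℝ) ^ (r - 1) * kfact ρ r / ((r - s - 1).factorial : ℝ))
              * ((r - s - 1).descFactorial (k + 1) : ℝ) * tau t (m - 1) ^ (r - s - 1 - (k + 1))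
              * iInt s (a m r) (t m)
        else 0)) (t j) := by
    refine HasDerivAt.fun_sum fun m hm => ?_
    rw [Finset.mem_Icc] at hm
    rcases eq_or_ne m j with hmj | hmj
    · subst hmj
      rw [if_pos rfl]
      refine HasDerivAt.fun_sum fun r hr => ?_
      refine HasDerivAt.fun_sum fun s hs => ?_
      rw [Finset.mem_Icc] at hr hs
      have base := (iInt_hasDerivAt (ha m r) (s - 1) (t m)).const_mul
        ((-1 : ℝ) ^ (r - 1) * kfact ρ r / ((r - s - 1).factorial : ℝ)
          * ((r - s - 1).descFactorial k : ℝ) * tau t (m - 1) ^ (r - s - 1 - k))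
      rw [show s - 1 + 1 = s by omega] at base
      exact base.congr_of_eventuallyEq (Filter.Eventually.of_forall fun x => by
        simp only [tau_update_of_lt t (show m - 1 < m by omega), Function.update_self])
    · rcases lt_or_gt_of_ne hmj with hlt | hgt
      · -- m < j : constant
        rw [if_neg hmj, if_neg (by omega)]
        exact (hasDerivAt_const (t j)
            (∑ r ∈ Finset.Icc 2 m, ∑ s ∈ Finset.Icc 1 (r - 1),
              ((-1 : ℝ) ^ (r - 1) * kfact ρ r / ((r - s - 1).factorial : ℝ))
                * ((r - s - 1).descFactorial k : ℝ) * tau t (m - 1) ^ (r - s - 1 - k)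
                * iInt s (a m r) (t m))).congr_of_eventuallyEq
          (Filter.Eventually.of_forall fun x =>
            Finset.sum_congr rfl fun r hr => Finset.sum_congr rfl fun s hs => by
              simp only [tau_update_of_lt t (show m - 1 < j by omega),
                Function.update_of_ne (show m ≠ j by omega)])
      · -- j < m
        rw [if_neg hmj, if_pos hgt]
        refine HasDerivAt.fun_sum fun r hr => ?_
        refine HasDerivAt.fun_sum fun s hs => ?_
        rw [Finset.mem_Icc] at hr hs
        have hpow : HasDerivAt (fun y : ℝ => (y + (tau t (m - 1) - t j)) ^ (r - s - 1 - k))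
            (((r - s - 1 - k : ℕ) : ℝ)
              * (t j + (tau t (m - 1) - t j)) ^ (r - s - 1 - k - 1)) (t j) := by
          simpa using (((hasDerivAt_id (t j)).add_const (tau t (m - 1) - t j)).fun_pow
            (r - s - 1 - k))
        have base := (hpow.const_mul
            ((-1 : ℝ) ^ (r - 1) * kfact ρ r / ((r - s - 1).factorial : ℝ)
              * ((r - s - 1).descFactorial k : ℝ))).mul_const (iInt s (a m r) (t m))
        convert base.congr_of_eventuallyEq (Filter.Eventually.of_forall fun x => ?_) using 1
        · rw [Nat.descFactorial_succ, Nat.cast_mul,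
            show r - s - 1 - (k + 1) = r - s - 1 - k - 1 by omega]
          ring
        · simp only [tau_update_of_le t (show j ≤ m - 1 by omega),
            Function.update_of_ne (show m ≠ j by omega)]
  -- derivative of the second sum
  have h2 : HasDerivAt
      (fun x => ∑ r ∈ Finset.Icc 1 n,
        ((-1 : ℝ) ^ r * kfact ρ r / ((r - 1).factorial : ℝ))
          * ((r - 1).descFactorial k : ℝ)
          * tau (Function.update t j x) (n - 1) ^ (r - 1 - k)
          * a n r (Function.update t j x n))
      (∑ r ∈ Finset.Icc 1 n,
        ((-1 : ℝ) ^ r * kfact ρ r / ((r - 1).factorial : ℝ))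
          * ((r - 1).descFactorial (k + 1) : ℝ)
          * tau t (n - 1) ^ (r - 1 - (k + 1)) * a n r (t n)) (t j) := by
    refine HasDerivAt.fun_sum fun r hr => ?_
    rw [Finset.mem_Icc] at hr
    have hpow : HasDerivAt (fun y : ℝ => (y + (tau t (n - 1) - t j)) ^ (r - 1 - k))
        (((r - 1 - k : ℕ) : ℝ)
          * (t j + (tau t (n - 1) - t j)) ^ (r - 1 - k - 1)) (t j) := by
      simpa using (((hasDerivAt_id (t j)).add_const (tau t (n - 1) - t j)).fun_pow (r - 1 - k))
    have base := (hpow.const_mul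
        ((-1 : ℝ) ^ r * kfact ρ r / ((r - 1).factorial : ℝ)
          * ((r - 1).descFactorial k : ℝ))).mul_const (a n r (t n))
    convert base.congr_of_eventuallyEq (Filter.Eventually.of_forall fun x => ?_) using 1
    · rw [Nat.descFactorial_succ, Nat.cast_mul,
        show r - 1 - (k + 1) = r - 1 - k - 1 by omega]
      ring
    · simp only [tau_update_of_le t (show j ≤ n - 1 by omega),
        Function.update_of_ne (show n ≠ j by omega)]
  have hmain := h1.fun_add h2
  have hfun : (fun x => Ffun ρ a n k (Function.update t j x))
      = (fun x => (∑ m ∈ Finset.Icc 2 (n - 1), ∑ r ∈ Finset.Icc 2 m, ∑ s ∈ Finset.Icc 1 (r - 1),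
          ((-1 : ℝ) ^ (r - 1) * kfact ρ r / ((r - s - 1).factorial : ℝ))
            * ((r - s - 1).descFactorial k : ℝ)
            * tau (Function.update t j x) (m - 1) ^ (r - s - 1 - k)
            * iInt s (a m r) (Function.update t j x m))
        + ∑ r ∈ Finset.Icc 1 n,
            ((-1 : ℝ) ^ r * kfact ρ r / ((r - 1).factorial : ℝ))
              * ((r - 1).descFactorial k : ℝ)
              * tau (Function.update t j x) (n - 1) ^ (r - 1 - k)
              * a n r (Function.update t j x n)) := rfl
  rw [hfun]
  refine hmain.congr_deriv ?_
  rw [sum_split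
    (fun m => ∑ r ∈ Finset.Icc 2 m, ∑ s ∈ Finset.Icc 1 (r - 1),
      ((-1 : ℝ) ^ (r - 1) * kfact ρ r / ((r - s - 1).factorial : ℝ))
        * ((r - s - 1).descFactorial (k + 1) : ℝ) * tau t (m - 1) ^ (r - s - 1 - (k + 1))
        * iInt s (a m r) (t m))
    (fun m => ∑ r ∈ Finset.Icc 2 m, ∑ s ∈ Finset.Icc 1 (r - 1),
      ((-1 : ℝ) ^ (r - 1) * kfact ρ r / ((r - s - 1).factorial : ℝ))
        * ((r - s - 1).descFactorial k : ℝ) * tau t (m - 1) ^ (r - s - 1 - k)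
        * iInt (s - 1) (a j r) (t j)) hjn]
  unfold Ffun Efun
  by_cases h2j : 2 ≤ j
  · rw [if_pos h2j]
    have hjj : tau t (j - 1) = tau t (j - 1) := rfl
    ring
  · rw [if_neg h2j, Finset.Icc_eq_empty (by omega : ¬ (2:ℕ) ≤ j)]
    simp
/-! ### The defect equals `-Ffun j (k+1)` -/

lemma per_r (ρ : ℝ) (a : ℕ → ℕ → ℝ → ℝ) (j k : ℕ) (t : ℕ → ℝ) {r : ℕ} (hr : 2 ≤ r) :
    (∑ s ∈ Finset.Icc 1 (r - 1),
        ((-1 : ℝ) ^ (r - 1) * kfact ρ r / ((r - s - 1).factorial : ℝ))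
          * ((r - s - 1).descFactorial k : ℝ) * tau t (j - 1) ^ (r - s - 1 - k)
          * iInt (s - 1) (a j r) (t j))
      - (∑ s ∈ Finset.Icc 1 (r - 1),
        ((-1 : ℝ) ^ (r - 1) * kfact ρ r / ((r - s - 1).factorial : ℝ))
          * ((r - s - 1).descFactorial (k + 1) : ℝ) * tau t (j - 1) ^ (r - s - 1 - (k + 1))
          * iInt s (a j r) (t j))
      = -(((-1 : ℝ) ^ r * kfact ρ r / ((r - 1).factorial : ℝ))
          * ((r - 1).descFactorial (k + 1) : ℝ) * tau t (j - 1) ^ (r - 1 - (k + 1))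
          * a j r (t j)) := by
  obtain ⟨R, rfl⟩ : ∃ R, r = R + 2 := ⟨r - 2, by omega⟩
  set g : ℕ → ℝ := fun s =>
    ((-1 : ℝ) ^ (R + 2 - 1) * kfact ρ (R + 2) / ((R + 2 - s - 1).factorial : ℝ))
      * ((R + 2 - s - 1).descFactorial k : ℝ) * tau t (j - 1) ^ (R + 2 - s - 1 - k)
      * iInt (s - 1) (a j (R + 2)) (t j) with hg
  have hsum1 : (∑ s ∈ Finset.Icc 1 (R + 2 - 1),
      ((-1 : ℝ) ^ (R + 2 - 1) * kfact ρ (R + 2) / ((R + 2 - s - 1).factorial : ℝ))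
        * ((R + 2 - s - 1).descFactorial k : ℝ) * tau t (j - 1) ^ (R + 2 - s - 1 - k)
        * iInt (s - 1) (a j (R + 2)) (t j)) = g 1 + ∑ s ∈ Finset.Icc 2 (R + 1), g s := by
    rw [show Finset.Icc 1 (R + 2 - 1) = insert 1 (Finset.Icc 2 (R + 1)) from by
        ext x; simp [Finset.mem_Icc, Finset.mem_insert]; omega,
      Finset.sum_insert (by simp)]
  have hsum2 : (∑ s ∈ Finset.Icc 1 (R + 2 - 1),
      ((-1 : ℝ) ^ (R + 2 - 1) * kfact ρ (R + 2) / ((R + 2 - s - 1).factorial : ℝ))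
        * ((R + 2 - s - 1).descFactorial (k + 1) : ℝ)
        * tau t (j - 1) ^ (R + 2 - s - 1 - (k + 1))
        * iInt s (a j (R + 2)) (t j)) = ∑ s ∈ Finset.Icc 2 (R + 1), g s := by
    rw [show R + 2 - 1 = R + 1 from rfl, Finset.sum_Icc_succ_top (by omega)]
    have hlast : ((-1 : ℝ) ^ (R + 1) * kfact ρ (R + 2)
          / ((R + 2 - (R + 1) - 1).factorial : ℝ))
        * ((R + 2 - (R + 1) - 1).descFactorial (k + 1) : ℝ)
        * tau t (j - 1) ^ (R + 2 - (R + 1) - 1 - (k + 1))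
        * iInt (R + 1) (a j (R + 2)) (t j) = 0 := by
      rw [show R + 2 - (R + 1) - 1 = 0 by omega]
      simp
    rw [hlast, add_zero, ← sum_shift]
    refine Finset.sum_congr rfl fun s hs => ?_
    rw [Finset.mem_Icc] at hs
    simp only [hg]
    rw [show R + 2 - 1 = R + 1 from rfl, show s + 1 - 1 = s from rfl,
      show R + 2 - (s + 1) - 1 = R - s by omega,
      show R + 2 - s - 1 = (R - s) + 1 by omega,
      show (R - s) + 1 - (k + 1) = (R - s) - k by omega,
      Nat.succ_descFactorial_succ, Nat.factorial_succ]
    have hf : (((R - s).factorial : ℕ) : ℝ) ≠ 0 := Nat.cast_ne_zero.2 (R - s).factorial_ne_zero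
    push_cast
    field_simp
  rw [hsum1, hsum2]
  have hg1 : g 1 = ((-1 : ℝ) ^ (R + 2 - 1) * kfact ρ (R + 2)
      / ((R + 2 - 1 - 1).factorial : ℝ))
      * ((R + 2 - 1 - 1).descFactorial k : ℝ) * tau t (j - 1) ^ (R + 2 - 1 - 1 - k)
      * iInt (1 - 1) (a j (R + 2)) (t j) := by rw [hg]
  rw [hg1, show R + 2 - 1 - 1 = R from rfl, show (1:ℕ) - 1 = 0 from rfl,
    show iInt 0 (a j (R + 2)) = a j (R + 2) from rfl,
    show R + 2 - 1 = R + 1 from rfl,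
    show R + 1 - (k + 1) = R - k by omega,
    Nat.succ_descFactorial_succ, Nat.factorial_succ]
  have hf : ((R.factorial : ℕ) : ℝ) ≠ 0 := Nat.cast_ne_zero.2 R.factorial_ne_zero
  push_cast
  field_simp
  ring

lemma Efun_eq (ρ : ℝ) (a : ℕ → ℕ → ℝ → ℝ) (j k : ℕ) (t : ℕ → ℝ) :
    Efun ρ a j k t = -Ffun ρ a j (k + 1) t := by
  by_cases h2 : 2 ≤ j
  · unfold Efun Ffun
    have hz : ∑ r ∈ Finset.Icc 2 j,
        ((∑ s ∈ Finset.Icc 1 (r - 1),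
          ((-1 : ℝ) ^ (r - 1) * kfact ρ r / ((r - s - 1).factorial : ℝ))
            * ((r - s - 1).descFactorial k : ℝ) * tau t (j - 1) ^ (r - s - 1 - k)
            * iInt (s - 1) (a j r) (t j))
        - (∑ s ∈ Finset.Icc 1 (r - 1),
          ((-1 : ℝ) ^ (r - 1) * kfact ρ r / ((r - s - 1).factorial : ℝ))
            * ((r - s - 1).descFactorial (k + 1) : ℝ) * tau t (j - 1) ^ (r - s - 1 - (k + 1))
            * iInt s (a j r) (t j))
        + (((-1 : ℝ) ^ r * kfact ρ r / ((r - 1).factorial : ℝ))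
            * ((r - 1).descFactorial (k + 1) : ℝ) * tau t (j - 1) ^ (r - 1 - (k + 1))
            * a j r (t j))) = 0 := by
      refine Finset.sum_eq_zero fun r hr => ?_
      rw [Finset.mem_Icc] at hr
      have h := per_r ρ a j k t hr.1
      linarith
    rw [Finset.sum_add_distrib, Finset.sum_sub_distrib] at hz
    -- split the m-sum of Efun at m = j
    have hsplitM : ∀ Q : ℕ → ℝ, ∑ m ∈ Finset.Icc 2 j, Q m
        = Q j + ∑ m ∈ Finset.Icc 2 (j - 1), Q m := by
      intro Q
      rw [show Finset.Icc 2 j = insert j (Finset.Icc 2 (j - 1)) from by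
          ext x; simp [Finset.mem_Icc, Finset.mem_insert]; omega,
        Finset.sum_insert (by rw [Finset.mem_Icc]; omega)]
    rw [hsplitM (fun m => ∑ r ∈ Finset.Icc 2 m, ∑ s ∈ Finset.Icc 1 (r - 1),
      ((-1 : ℝ) ^ (r - 1) * kfact ρ r / ((r - s - 1).factorial : ℝ))
        * ((r - s - 1).descFactorial (k + 1) : ℝ) * tau t (m - 1) ^ (r - s - 1 - (k + 1))
        * iInt s (a m r) (t m))]
    -- split the r-sum of Ffun at r = 1
    have hsplitR : ∑ r ∈ Finset.Icc 1 j,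
        ((-1 : ℝ) ^ r * kfact ρ r / ((r - 1).factorial : ℝ))
          * ((r - 1).descFactorial (k + 1) : ℝ) * tau t (j - 1) ^ (r - 1 - (k + 1))
          * a j r (t j)
        = ∑ r ∈ Finset.Icc 2 j,
        ((-1 : ℝ) ^ r * kfact ρ r / ((r - 1).factorial : ℝ))
          * ((r - 1).descFactorial (k + 1) : ℝ) * tau t (j - 1) ^ (r - 1 - (k + 1))
          * a j r (t j) := by
      rw [show Finset.Icc 1 j = insert 1 (Finset.Icc 2 j) from by
          ext x; simp [Finset.mem_Icc, Finset.mem_insert]; omega,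
        Finset.sum_insert (by rw [Finset.mem_Icc]; omega)]
      simp
    rw [hsplitR]
    linarith
  · -- j ≤ 1 : everything vanishes
    unfold Efun Ffun
    rw [Finset.Icc_eq_empty (show ¬ (2:ℕ) ≤ j by omega),
      Finset.Icc_eq_empty (show ¬ (2:ℕ) ≤ j - 1 by omega)]
    interval_cases j
    · simp
    · simp
/-! ### Assembly -/

lemma pd0iter_cfun (ρ : ℝ) (a : ℕ → ℕ → ℝ → ℝ) (ha : ∀ m r, Continuous (a m r))
    {n : ℕ} (hn : 1 ≤ n) (k : ℕ) : pd0iter k (cfun ρ a n) = Ffun ρ a n k := by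
  induction k with
  | zero => exact (Ffun_zero ρ a n).symm
  | succ k ih =>
    funext t
    show pdG 0 (pd0iter k (cfun ρ a n)) t = _
    rw [ih]
    show deriv (fun x => Ffun ρ a n k (Function.update t 0 x)) (t 0) = _
    rw [(hasDerivAt_Ffun ρ a ha k (show 0 < n by omega) t).deriv, Efun_eq,
      Ffun_eq_zero ρ a (Nat.zero_le (k + 1)) t]
    ring

lemma uA_eq (ρ : ℝ) (a : ℕ → ℕ → ℝ → ℝ) (ha : ∀ m r, Continuous (a m r))
    {m i : ℕ} (h1 : 1 ≤ i) (h2 : i ≤ m) (t : ℕ → ℝ) :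
    uA ρ a m i t = ((-1 : ℝ) ^ i / kfact ρ i) * Ffun ρ a m (i - 1) t := by
  unfold uA
  rw [if_neg (by omega)]
  rcases eq_or_ne i 1 with hi | hi
  · subst hi
    rw [if_pos rfl, show (1 : ℕ) - 1 = 0 from rfl, Ffun_zero]
    show -(cfun ρ a m t) = (-1 : ℝ) ^ 1 / kfact ρ 1 * cfun ρ a m t
    rw [show kfact ρ 1 = 1 from rfl]
    ring
  · rw [if_neg hi, pd0iter_cfun ρ a ha (show 1 ≤ m by omega)]

lemma kfact_succ (ρ : ℝ) {i : ℕ} (h : 1 ≤ i) :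
    kfact ρ (i + 1) = kfact ρ i * kappa ρ (i + 1) := by
  obtain ⟨i', rfl⟩ : ∃ i', i = i' + 1 := ⟨i - 1, by omega⟩
  rfl

lemma eps_eq (ρ : ℝ) {i : ℕ} (h1 : 1 ≤ i) (hκ : kappa ρ (i + 1) ≠ 0) :
    kappa ρ (i + 1) * ((-1 : ℝ) ^ (i + 1) / kfact ρ (i + 1))
      = -((-1 : ℝ) ^ i / kfact ρ i) := by
  rw [kfact_succ ρ h1, pow_succ]
  rcases eq_or_ne (kfact ρ i) 0 with h | h
  · simp [h]
  · field_simp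

lemma pdG_uA (ρ : ℝ) (a : ℕ → ℕ → ℝ → ℝ) (ha : ∀ m r, Continuous (a m r))
    {n i j : ℕ} (h1 : 1 ≤ i) (h2 : i ≤ n) (hj : j < n) (t : ℕ → ℝ) :
    pdG j (uA ρ a n i) t
      = ((-1 : ℝ) ^ i / kfact ρ i) * (Ffun ρ a n i t - Ffun ρ a j i t) := by
  have hfun : (fun x => uA ρ a n i (Function.update t j x))
      = fun x => ((-1 : ℝ) ^ i / kfact ρ i) * Ffun ρ a n (i - 1) (Function.update t j x) :=
    funext fun x => uA_eq ρ a ha h1 h2 _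
  show deriv (fun x => uA ρ a n i (Function.update t j x)) (t j) = _
  rw [hfun,
    (((hasDerivAt_Ffun ρ a ha (i - 1) hj t).const_mul ((-1 : ℝ) ^ i / kfact ρ i)).deriv),
    Efun_eq, show i - 1 + 1 = i by omega]
  ring

end StmtSixAux

/-- The coefficients `u_{m,i}` satisfy, for every `0 ≤ j < n`:
(a) `∂u_{n,n}/∂tⱼ = 0`;
(b) `∂u_{n,i}/∂tⱼ + κ_{i+1} u_{n,i+1} = 0` for `max(j,1) ≤ i ≤ n-1`;
(c) `∂u_{n,i}/∂tⱼ + κ_{i+1}(u_{n,i+1} - u_{j,i+1}) = 0` for `1 ≤ i ≤ j-1`. -/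
theorem stmt6 (ρ : ℝ) (a : ℕ → ℕ → ℝ → ℝ) (ha : ∀ m r, Continuous (a m r))
    (n : ℕ) (hn : 1 ≤ n)
    (hκ : ∀ m : ℕ, 2 ≤ m → m ≤ n → kappa ρ m ≠ 0) :
    ∀ j : ℕ, j < n →
      (∀ t : ℕ → ℝ, pdG j (uA ρ a n n) t = 0)
      ∧ (∀ i : ℕ, max j 1 ≤ i → i ≤ n - 1 → ∀ t : ℕ → ℝ,
          pdG j (uA ρ a n i) t + kappa ρ (i + 1) * uA ρ a n (i + 1) t = 0)
      ∧ (∀ i : ℕ, 1 ≤ i → i ≤ j - 1 → ∀ t : ℕ → ℝ,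
          pdG j (uA ρ a n i) t
            + kappa ρ (i + 1) * (uA ρ a n (i + 1) t - uA ρ a j (i + 1) t) = 0) := by
  intro j hj
  refine ⟨?_, ?_, ?_⟩
  · -- (a)
    intro t
    rw [pdG_uA ρ a ha hn (le_refl n) hj t,
      Ffun_eq_zero ρ a (le_refl n) t, Ffun_eq_zero ρ a (le_of_lt hj) t]
    ring
  · -- (b)
    intro i hi1 hi2 t
    have h1 : 1 ≤ i := le_trans (le_max_right j 1) hi1
    have hji : j ≤ i := le_trans (le_max_left j 1) hi1
    have h2 : i ≤ n := by omega
    rw [pdG_uA ρ a ha h1 h2 hj t,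
      uA_eq ρ a ha (show 1 ≤ i + 1 by omega) (show i + 1 ≤ n by omega) t,
      show i + 1 - 1 = i from rfl,
      Ffun_eq_zero ρ a hji t]
    have hk := eps_eq ρ h1 (hκ (i + 1) (by omega) (by omega))
    linear_combination Ffun ρ a n i t * hk
  · -- (c)
    intro i hi1 hi2 t
    have hij : i + 1 ≤ j := by omega
    rw [pdG_uA ρ a ha hi1 (by omega) hj t,
      uA_eq ρ a ha (show 1 ≤ i + 1 by omega) (show i + 1 ≤ n by omega) t,
      uA_eq ρ a ha (show 1 ≤ i + 1 by omega) hij t,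
      show i + 1 - 1 = i from rfl]
    have hk := eps_eq ρ hi1 (hκ (i + 1) (by omega) (by omega))
    linear_combination (Ffun ρ a n i t - Ffun ρ a j i t) * hk
end

section
/- For each 1 ≤ m ≤ n define u_{m,i}(t₀, …, t_m) = Σ_{r=i}^{m−1} c_{r,i}(t_r) e^{−κ_i τ_{r−1}} + a_{m,i}(t_m) e^{−κ_i τ_{m−1}} for 1 ≤ i ≤ m, with the convention u_{m,i} = 0 for i > m and u_{0,i} = 0. Then for every 0 ≤ j < n the following identities hold: (a) ∂u_{n,i}/∂t_j + κ_i u_{n,i} = 0 for j+1 ≤ i ≤ n; (b) ∂u_{n,i}/∂t_j + κ_i(u_{n,i} − u_{j,i}) = 0 for 1 ≤ i ≤ j. -/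
/-- Partial derivative `∂f/∂tⱼ` of a function of the variables `t = (t₀, t₁, t₂, …)`. -/
noncomputable def pd (j : ℕ) (f : (ℕ → ℝ) → ℝ) (t : ℕ → ℝ) : ℝ :=
  deriv (fun s => f (Function.update t j s)) (t j)

/-- The coefficients
`u_{m,i}(t) = Σ_{r=i}^{m-1} c_{r,i}(t_r) e^{-κᵢ τ_{r-1}} + a_{m,i}(tₘ) e^{-κᵢ τ_{m-1}}`
for `1 ≤ i ≤ m`, with the conventions `u_{m,i} = 0` for `i > m` and `u_{0,i} = 0`. -/
noncomputable def uB (ρ : ℝ) (a c : ℕ → ℕ → ℝ → ℝ) (m i : ℕ) (t : ℕ → ℝ) : ℝ :=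
  if 1 ≤ i ∧ i ≤ m then
    (∑ r ∈ Finset.Ico i m, c r i (t r) * Real.exp (-(kappa ρ i) * tau t (r - 1)))
      + a m i (t m) * Real.exp (-(kappa ρ i) * tau t (m - 1))
  else 0

lemma tau_update_eq (t : ℕ → ℝ) (j m : ℕ) (hjm : j ≤ m) (s : ℝ) :
    tau (Function.update t j s) m = s + ∑ i ∈ (Finset.range (m+1)).erase j, t i := by
  rw [tau, Finset.sum_update_of_mem (by simp [Nat.lt_succ_iff, hjm]), Finset.erase_eq]

lemma tau_self_eq (t : ℕ → ℝ) (j m : ℕ) (hjm : j ≤ m) :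
    tau t m = t j + ∑ i ∈ (Finset.range (m+1)).erase j, t i := by
  have h := tau_update_eq t j m hjm (t j)
  rwa [Function.update_eq_self] at h

lemma tau_update_lt (t : ℕ → ℝ) (j m : ℕ) (hmj : m < j) (s : ℝ) :
    tau (Function.update t j s) m = tau t m := by
  unfold tau
  refine Finset.sum_congr rfl fun k hk => ?_
  rw [Function.update_of_ne]
  simp only [Finset.mem_range] at hk; omega

/-- Derivative of a single exponential-type term `s ↦ C * exp(-κ * tau (update t j s) m)`
when `j ≤ m`. -/
lemma hasDerivAt_exp_term (t : ℕ → ℝ) (j m : ℕ) (hjm : j ≤ m) (κ C : ℝ) :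
    HasDerivAt (fun s => C * Real.exp (-κ * tau (Function.update t j s) m))
      (-κ * (C * Real.exp (-κ * tau t m))) (t j) := by
  have h1 : HasDerivAt (fun s : ℝ => -κ * (s + ∑ i ∈ (Finset.range (m+1)).erase j, t i))
      (-κ) (t j) := by
    simpa using ((hasDerivAt_id (t j)).add_const _).const_mul (-κ)
  have h2 := (h1.exp).const_mul C
  have heq : (fun s => C * Real.exp (-κ * tau (Function.update t j s) m))
      = fun s => C * Real.exp (-κ * (s + ∑ i ∈ (Finset.range (m+1)).erase j, t i)) := by
    funext s; rw [tau_update_eq t j m hjm]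
  rw [heq]
  refine h2.congr_deriv ?_
  rw [← tau_self_eq t j m hjm]
  ring

lemma pd_uB (ρ : ℝ) (n j : ℕ) (a c : ℕ → ℕ → ℝ → ℝ)
    (hc : ∀ (r i : ℕ) (s : ℝ),
      HasDerivAt (c r i) (kappa ρ i * a r i s - kappa ρ i * c r i s) s)
    (i : ℕ) (hi1 : 1 ≤ i) (hin : i ≤ n) (hjn : j < n) (t : ℕ → ℝ) :
    pd j (uB ρ a c n i) t =
      (∑ r ∈ Finset.Ico i n,
        if r < j then 0
        else if r = j then
          (kappa ρ i * a r i (t j) - kappa ρ i * c r i (t j)) *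
            Real.exp (-(kappa ρ i) * tau t (r-1))
        else -(kappa ρ i) * (c r i (t r) * Real.exp (-(kappa ρ i) * tau t (r-1))))
      + -(kappa ρ i) * (a n i (t n) * Real.exp (-(kappa ρ i) * tau t (n-1))) := by
  set κ := kappa ρ i with hκ
  have hfun : (fun s => uB ρ a c n i (Function.update t j s)) =
      fun s => (∑ r ∈ Finset.Ico i n,
        c r i (Function.update t j s r) *
          Real.exp (-κ * tau (Function.update t j s) (r - 1)))
        + a n i (Function.update t j s n) *
            Real.exp (-κ * tau (Function.update t j s) (n - 1)) := by
    funext s; rw [uB, if_pos ⟨hi1, hin⟩]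
  have hterm : ∀ r ∈ Finset.Ico i n,
      HasDerivAt (fun s => c r i (Function.update t j s r) *
          Real.exp (-κ * tau (Function.update t j s) (r - 1)))
        (if r < j then 0
        else if r = j then
          (κ * a r i (t j) - κ * c r i (t j)) * Real.exp (-κ * tau t (r-1))
        else -κ * (c r i (t r) * Real.exp (-κ * tau t (r-1)))) (t j) := by
    intro r hr
    simp only [Finset.mem_Ico] at hr
    rcases lt_trichotomy r j with h | h | h
    · rw [if_pos h]
      have heq : (fun s => c r i (Function.update t j s r) *
          Real.exp (-κ * tau (Function.update t j s) (r - 1)))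
          = fun _ => c r i (t r) * Real.exp (-κ * tau t (r-1)) := by
        funext s
        rw [Function.update_of_ne (by omega), tau_update_lt t j (r-1) (by omega)]
      rw [heq]; exact hasDerivAt_const _ _
    · subst h
      rw [if_neg (by omega), if_pos rfl]
      have heq : (fun s => c r i (Function.update t r s r) *
          Real.exp (-κ * tau (Function.update t r s) (r - 1)))
          = fun s => c r i s * Real.exp (-κ * tau t (r-1)) := by
        funext s
        rw [Function.update_self, tau_update_lt t r (r-1) (by omega)]
      rw [heq]
      exact (hc r i (t r)).mul_const _
    · rw [if_neg (by omega), if_neg (by omega)]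
      have heq : (fun s => c r i (Function.update t j s r) *
          Real.exp (-κ * tau (Function.update t j s) (r - 1)))
          = fun s => c r i (t r) * Real.exp (-κ * tau (Function.update t j s) (r-1)) := by
        funext s; rw [Function.update_of_ne (by omega)]
      rw [heq]
      exact hasDerivAt_exp_term t j (r-1) (by omega) κ _
    -- trichotomy done
  have hsum := HasDerivAt.fun_sum hterm
  have hlast : HasDerivAt (fun s => a n i (Function.update t j s n) *
      Real.exp (-κ * tau (Function.update t j s) (n - 1)))
      (-κ * (a n i (t n) * Real.exp (-κ * tau t (n-1)))) (t j) := by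
    have heq : (fun s => a n i (Function.update t j s n) *
        Real.exp (-κ * tau (Function.update t j s) (n - 1)))
        = fun s => a n i (t n) * Real.exp (-κ * tau (Function.update t j s) (n-1)) := by
      funext s; rw [Function.update_of_ne (by omega)]
    rw [heq]
    exact hasDerivAt_exp_term t j (n-1) (by omega) κ _
  have := hsum.add hlast
  rw [pd, hfun]
  exact this.deriv

/-- The coefficients `u_{m,i}` satisfy, for every `0 ≤ j < n`:
(a) `∂u_{n,i}/∂tⱼ + κᵢ u_{n,i} = 0` for `j+1 ≤ i ≤ n`;
(b) `∂u_{n,i}/∂tⱼ + κᵢ(u_{n,i} - u_{j,i}) = 0` for `1 ≤ i ≤ j`. -/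
theorem stmt12 (ρ : ℝ) (n : ℕ) (hn : 1 ≤ n)
    (a : ℕ → ℕ → ℝ → ℝ) (ha : ∀ m i, Continuous (a m i))
    (c : ℕ → ℕ → ℝ → ℝ)
    (hc : ∀ (r i : ℕ) (s : ℝ),
      HasDerivAt (c r i) (kappa ρ i * a r i s - kappa ρ i * c r i s) s)
    (hc0 : ∀ r i : ℕ, c r i 0 = 0) :
    ∀ j : ℕ, j < n →
      (∀ i : ℕ, j + 1 ≤ i → i ≤ n → ∀ t : ℕ → ℝ,
        pd j (uB ρ a c n i) t + kappa ρ i * uB ρ a c n i t = 0)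
      ∧ (∀ i : ℕ, 1 ≤ i → i ≤ j → ∀ t : ℕ → ℝ,
        pd j (uB ρ a c n i) t + kappa ρ i * (uB ρ a c n i t - uB ρ a c j i t) = 0) := by
  intro j hjn
  constructor
  · intro i hji hin t
    rw [pd_uB ρ n j a c hc i (by omega) hin hjn t]
    rw [Finset.sum_congr rfl (fun r hr => by
      simp only [Finset.mem_Ico] at hr
      rw [if_neg (by omega), if_neg (by omega)])]
    rw [uB, if_pos ⟨by omega, hin⟩, ← Finset.mul_sum]
    ring
  · intro i hi1 hij t
    rw [pd_uB ρ n j a c hc i hi1 (by omega) hjn t]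
    set κ := kappa ρ i with hκ
    have hD : (∑ r ∈ Finset.Ico i n,
        if r < j then 0
        else if r = j then
          (κ * a r i (t j) - κ * c r i (t j)) * Real.exp (-κ * tau t (r-1))
        else -κ * (c r i (t r) * Real.exp (-κ * tau t (r-1))))
        = (κ * a j i (t j) - κ * c j i (t j)) * Real.exp (-κ * tau t (j-1))
          + -κ * ∑ r ∈ Finset.Ico (j+1) n,
              c r i (t r) * Real.exp (-κ * tau t (r-1)) := by
      rw [← Finset.sum_Ico_consecutive _ hij (by omega : j ≤ n)]
      rw [Finset.sum_eq_zero (fun r hr => by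
        simp only [Finset.mem_Ico] at hr; rw [if_pos hr.2])]
      rw [Finset.sum_eq_sum_Ico_succ_bot hjn]
      rw [if_neg (by omega), if_pos rfl]
      rw [Finset.sum_congr rfl (fun r hr => by
        simp only [Finset.mem_Ico] at hr
        rw [if_neg (by omega), if_neg (by omega)])]
      rw [Finset.mul_sum, zero_add]
    rw [hD]
    have hsplit : (∑ r ∈ Finset.Ico i n, c r i (t r) * Real.exp (-κ * tau t (r-1)))
        = (∑ r ∈ Finset.Ico i j, c r i (t r) * Real.exp (-κ * tau t (r-1)))
          + c j i (t j) * Real.exp (-κ * tau t (j-1))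
          + ∑ r ∈ Finset.Ico (j+1) n, c r i (t r) * Real.exp (-κ * tau t (r-1)) := by
      rw [← Finset.sum_Ico_consecutive _ (by omega : i ≤ j+1) (by omega : j+1 ≤ n),
        Finset.sum_Ico_succ_top hij]
    rw [uB, if_pos ⟨hi1, by omega⟩, uB, if_pos ⟨hi1, hij⟩, hsplit]
    ring
end
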